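/- For the hyperboloid model with metric g_{11} = r r†, g_{ab} = δ_{ab} r r† sinh² u^1 ∏_{c=2}^a sin² u^{c−1} (a ≥ 2) and constant mixture curvature −1/(r r†), the function ν(u) = 1/(|sinh u^1| ∏_{a=2}^m |sin u^a|) satisfies the gauge equation ∂_a s_b − Γ^{(−1)c}_{ab} s_c − s_a s_b = −(1/(r r†)) g_{ab}, where s_a = ∂_a log ν. -/

import Mathlib

noncomputable def pd {m : ℕ} (i : Fin m) (f : (Fin m → ℝ) → ℝ) (x : Fin m → ℝ) : ℝ :=
  fderiv ℝ f x (Pi.single i 1)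


open Real Finset


/-- basic single-variable functions indexed by a code -/
noncomputable def ff : ℕ → ℝ → ℝ
  | 0 => fun _ => 1
  | 1 => Real.sin
  | 2 => Real.cos
  | 3 => Real.sinh
  | _ => Real.cosh

/-- derivative code -/
def dd : ℕ → ℕ
  | 0 => 0
  | 1 => 2
  | 2 => 1
  | 3 => 4
  | _ => 3

/-- sign of derivative -/
noncomputable def sg : ℕ → ℝ
  | 0 => 0
  | 2 => -1
  | _ => 1

lemma hasDerivAt_ff (k : ℕ) (x : ℝ) :
    HasDerivAt (ff k) (sg k * ff (dd k) x) x := by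
  match k with
  | 0 => simpa [ff, dd, sg] using hasDerivAt_const x (1:ℝ)
  | 1 => simpa [ff, dd, sg] using Real.hasDerivAt_sin x
  | 2 => simpa [ff, dd, sg] using Real.hasDerivAt_cos x
  | 3 => simpa [ff, dd, sg] using Real.hasDerivAt_sinh x
  | (n+4) => simpa [ff, dd, sg] using Real.hasDerivAt_cosh x

variable {m : ℕ}

/-- product of basic functions -/
noncomputable def FF (k : Fin m → ℕ) (u : Fin m → ℝ) : ℝ := ∏ e, ff (k e) (u e)

/-- the e-partial of `FF k` -/
noncomputable def DF (k : Fin m → ℕ) (e : Fin m) : (Fin m → ℝ) → ℝ :=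
  fun u => sg (k e) * FF (Function.update k e (dd (k e))) u

lemma FF_update (k : Fin m → ℕ) (e : Fin m) (d : ℕ) (u : Fin m → ℝ) :
    FF (Function.update k e d) u = ff d (u e) * ∏ e' ∈ univ.erase e, ff (k e') (u e') := by
  rw [FF, ← Finset.mul_prod_erase (univ) _ (Finset.mem_univ e)]
  rw [Function.update_self]
  congr 1
  refine Finset.prod_congr rfl fun e' he' => ?_
  rw [Function.update_of_ne (Finset.ne_of_mem_erase he')]

/-- the key exchange identity -/
lemma FF_update_mul (k : Fin m → ℕ) (e : Fin m) (d : ℕ) (u : Fin m → ℝ) :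
    ff (k e) (u e) * FF (Function.update k e d) u = ff d (u e) * FF k u := by
  rw [FF_update, FF, ← Finset.mul_prod_erase (univ) _ (Finset.mem_univ e)]
  ring

noncomputable def LF (k : Fin m → ℕ) (u : Fin m → ℝ) : (Fin m → ℝ) →L[ℝ] ℝ :=
  ∑ e, DF k e u • (ContinuousLinearMap.proj e : (Fin m → ℝ) →L[ℝ] ℝ)

lemma hasFDerivAt_FF (k : Fin m → ℕ) (u : Fin m → ℝ) :
    HasFDerivAt (FF k) (LF k u) u := by
  have h : ∀ e ∈ (univ : Finset (Fin m)), HasFDerivAt (fun v : Fin m → ℝ => ff (k e) (v e))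
      ((sg (k e) * ff (dd (k e)) (u e)) • (ContinuousLinearMap.proj e : (Fin m → ℝ) →L[ℝ] ℝ)) u := by
    intro e _
    exact (hasDerivAt_ff (k e) (u e)).comp_hasFDerivAt u
      ((ContinuousLinearMap.proj e : (Fin m → ℝ) →L[ℝ] ℝ).hasFDerivAt)
  have h2 := HasFDerivAt.finset_prod h
  have hL : (∑ e, (∏ j ∈ univ.erase e, ff (k j) (u j)) •
      ((sg (k e) * ff (dd (k e)) (u e)) • (ContinuousLinearMap.proj e : (Fin m → ℝ) →L[ℝ] ℝ)))
      = LF k u := by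
    rw [LF]
    refine Finset.sum_congr rfl fun e _ => ?_
    rw [smul_smul, DF, FF_update]
    congr 1
    ring
  rw [← hL]
  exact h2

lemma pd_FF (k : Fin m → ℕ) (i : Fin m) (u : Fin m → ℝ) :
    pd i (FF k) u = DF k i u := by
  rw [pd, (hasFDerivAt_FF k u).fderiv, LF]
  simp only [ContinuousLinearMap.coe_sum', Finset.sum_apply, ContinuousLinearMap.coe_smul',
    Pi.smul_apply, ContinuousLinearMap.proj_apply, smul_eq_mul]
  rw [Finset.sum_eq_single i]
  · simp
  · intro b _ hb; simp [Pi.single_apply, hb]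
  · simp

section Part2
variable {m : ℕ}

/-- exponent pattern of ξ_j -/
def K (m : ℕ) (j : ℕ) : Fin m → ℕ := fun e =>
  if j = 0 then (if (e : ℕ) = 0 then 4 else 0)
  else if (e : ℕ) = 0 then 3 else if (e : ℕ) < j then 1 else if (e : ℕ) = j then 2 else 0

lemma E0 (hm : 0 < m) (u : Fin m → ℝ) : FF (K m 0) u = Real.cosh (u ⟨0, hm⟩) := by
  rw [FF, Finset.prod_eq_single_of_mem (⟨0, hm⟩ : Fin m) (Finset.mem_univ _)]
  · simp [K, ff]
  · intro b _ hb
    have : (b : ℕ) ≠ 0 := fun h => hb (Fin.ext h)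
    simp [K, this, ff]

lemma Eform (hm : 0 < m) (p q : ℕ) (hp : 1 ≤ p) (u : Fin m → ℝ) :
    FF (fun e : Fin m => if (e : ℕ) = 0 then 3 else if (e : ℕ) < p then 1
        else if (e : ℕ) = p then q else 0) u
      = Real.sinh (u ⟨0, hm⟩) *
        (∏ e ∈ Finset.univ.filter (fun e : Fin m => 1 ≤ (e : ℕ) ∧ (e : ℕ) < p),
          Real.sin (u e)) *
        (if h : p < m then ff q (u ⟨p, h⟩) else 1) := by
  classical
  set z : Fin m := ⟨0, hm⟩ with hz
  rw [FF, ← Finset.mul_prod_erase Finset.univ _ (Finset.mem_univ z)]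
  have hz0 : ((z : Fin m) : ℕ) = 0 := rfl
  rw [show (if ((z : Fin m) : ℕ) = 0 then 3 else if ((z:Fin m) : ℕ) < p then 1
      else if ((z:Fin m) : ℕ) = p then q else 0) = 3 by simp [hz0]]
  have hsplit := Finset.prod_filter_mul_prod_filter_not (Finset.univ.erase z)
    (fun e : Fin m => (e : ℕ) < p)
    (fun e : Fin m => ff (if (e : ℕ) = 0 then 3 else if (e : ℕ) < p then 1
        else if (e : ℕ) = p then q else 0) (u e))
  rw [← hsplit]
  have h1 : ((Finset.univ.erase z).filter (fun e : Fin m => (e : ℕ) < p))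
      = Finset.univ.filter (fun e : Fin m => 1 ≤ (e : ℕ) ∧ (e : ℕ) < p) := by
    ext e
    simp only [Finset.mem_filter, Finset.mem_erase, Finset.mem_univ, true_and, and_true]
    constructor
    · rintro ⟨he, hep⟩
      have : (e : ℕ) ≠ 0 := fun h => he (Fin.ext h)
      exact ⟨by omega, hep⟩
    · rintro ⟨he1, hep⟩
      exact ⟨fun h => by simp [hz] at h; omega, hep⟩
  have h2 : ∀ e ∈ ((Finset.univ.erase z).filter (fun e : Fin m => (e : ℕ) < p)),
      ff (if (e : ℕ) = 0 then 3 else if (e : ℕ) < p then 1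
        else if (e : ℕ) = p then q else 0) (u e) = Real.sin (u e) := by
    intro e he
    simp only [Finset.mem_filter, Finset.mem_erase] at he
    have hne : (e : ℕ) ≠ 0 := fun h => he.1.1 (Fin.ext h)
    simp [hne, he.2, ff]
  rw [Finset.prod_congr rfl h2, h1]
  have h3 : (∏ e ∈ ((Finset.univ.erase z).filter (fun e : Fin m => ¬ (e : ℕ) < p)),
      ff (if (e : ℕ) = 0 then 3 else if (e : ℕ) < p then 1
        else if (e : ℕ) = p then q else 0) (u e))
      = (if h : p < m then ff q (u ⟨p, h⟩) else 1) := by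
    by_cases hpm : p < m
    · rw [dif_pos hpm]
      rw [Finset.prod_eq_single_of_mem (⟨p, hpm⟩ : Fin m) ?_ ?_]
      · have hp0 : ¬ p = 0 := by omega
        simp [hp0]
      · simp only [Finset.mem_filter, Finset.mem_erase, Finset.mem_univ, true_and, and_true,
          not_lt]
        constructor
        · intro h
          have : p = 0 := by simpa [hz, Fin.ext_iff] using h
          omega
        · omega
      · intro b hb hbne
        simp only [Finset.mem_filter, Finset.mem_erase] at hb
        have hb0 : (b : ℕ) ≠ 0 := fun h => hb.1.1 (Fin.ext h)
        have hbp : (b : ℕ) ≠ p := fun h => hbne (Fin.ext h)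
        simp [hb0, hb.2, hbp, ff]
    · rw [dif_neg hpm]
      refine Finset.prod_eq_one (fun e he => ?_)
      simp only [Finset.mem_filter, Finset.mem_erase] at he
      exact absurd (lt_of_lt_of_le e.isLt (by omega)) he.2
  rw [h3, mul_assoc]
  rfl

lemma K_form (m : ℕ) (j : ℕ) (hj : 1 ≤ j) :
    K m j = fun e : Fin m => if (e : ℕ) = 0 then 3 else if (e : ℕ) < j then 1
        else if (e : ℕ) = j then 2 else 0 := by
  funext e
  have : ¬ j = 0 := by omega
  simp [K, this]

lemma Ej (hm : 0 < m) (j : ℕ) (hj : 1 ≤ j) (u : Fin m → ℝ) :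
    FF (K m j) u
      = Real.sinh (u ⟨0, hm⟩) *
        (∏ e ∈ Finset.univ.filter (fun e : Fin m => 1 ≤ (e : ℕ) ∧ (e : ℕ) < j),
          Real.sin (u e)) *
        (if h : j < m then Real.cos (u ⟨j, h⟩) else 1) := by
  rw [K_form m j hj, Eform hm j 2 hj u]
  rfl

end Part2
section Part3
variable {m : ℕ}

lemma Zsum (hm : 0 < m) : ∀ t k : ℕ, k + t = m → 1 ≤ k → ∀ u : Fin m → ℝ,
    ∑ j ∈ Finset.univ.filter (fun j : Fin (m+1) => k ≤ (j : ℕ)), (FF (K m (j : ℕ)) u) ^ 2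
      = Real.sinh (u ⟨0, hm⟩) ^ 2 *
        ∏ e ∈ Finset.univ.filter (fun e : Fin m => 1 ≤ (e : ℕ) ∧ (e : ℕ) < k),
          Real.sin (u e) ^ 2 := by
  intro t
  induction t with
  | zero =>
    intro k hk hk1 u
    subst hk
    rw [Finset.sum_eq_single_of_mem (Fin.last (k + 0)) ?_ ?_]
    · rw [Fin.val_last]
      rw [Ej hm (k+0) (by omega) u]
      have : ¬ (k + 0 < k + 0) := by omega
      rw [dif_neg this]
      rw [mul_pow, mul_pow, one_pow, Finset.prod_pow]
      simp [Fin.last]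
    · simp [Fin.last]
    · intro b hb hbne
      simp only [Finset.mem_filter, Finset.mem_univ, true_and] at hb
      exfalso
      apply hbne
      have := b.isLt
      apply Fin.ext
      simp only [Fin.val_last]
      omega
  | succ t ih =>
    intro k hk hk1 u
    have hkm : k < m := by omega
    have hsets : Finset.univ.filter (fun j : Fin (m+1) => k ≤ (j : ℕ))
        = insert (⟨k, by omega⟩ : Fin (m+1))
            (Finset.univ.filter (fun j : Fin (m+1) => k + 1 ≤ (j : ℕ))) := by
      ext j
      simp only [Finset.mem_filter, Finset.mem_univ, true_and, Finset.mem_insert, Fin.ext_iff]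
      omega
    rw [hsets, Finset.sum_insert (by simp)]
    rw [ih (k+1) (by omega) (by omega) u]
    have hprod : (∏ e ∈ Finset.univ.filter (fun e : Fin m => 1 ≤ (e : ℕ) ∧ (e : ℕ) < k + 1),
        Real.sin (u e) ^ 2)
        = Real.sin (u ⟨k, hkm⟩) ^ 2 *
          ∏ e ∈ Finset.univ.filter (fun e : Fin m => 1 ≤ (e : ℕ) ∧ (e : ℕ) < k),
            Real.sin (u e) ^ 2 := by
      have : Finset.univ.filter (fun e : Fin m => 1 ≤ (e : ℕ) ∧ (e : ℕ) < k + 1)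
          = insert (⟨k, hkm⟩ : Fin m)
              (Finset.univ.filter (fun e : Fin m => 1 ≤ (e : ℕ) ∧ (e : ℕ) < k)) := by
        ext e
        simp only [Finset.mem_filter, Finset.mem_univ, true_and, Finset.mem_insert, Fin.ext_iff]
        omega
      rw [this, Finset.prod_insert (by simp)]
    rw [hprod]
    rw [show ((⟨k, by omega⟩ : Fin (m+1)) : ℕ) = k from rfl]
    rw [Ej hm k (by omega) u, dif_pos hkm]
    have hsc := Real.sin_sq_add_cos_sq (u ⟨k, hkm⟩)
    rw [mul_pow, mul_pow, Finset.prod_pow]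
    linear_combination (Real.sinh (u ⟨0, hm⟩) ^ 2 *
      (∏ e ∈ Finset.univ.filter (fun e : Fin m => 1 ≤ (e : ℕ) ∧ (e : ℕ) < k),
        Real.sin (u e)) ^ 2) * hsc

end Part3
section Part4
variable {m : ℕ}

noncomputable def eps (m : ℕ) : Fin (m+1) → ℝ := fun j => if (j : ℕ) = 0 then -1 else 1

lemma LF_apply (k : Fin m → ℕ) (u : Fin m → ℝ) (i : Fin m) :
    LF k u (Pi.single i 1) = DF k i u := by
  rw [LF]
  simp only [ContinuousLinearMap.coe_sum', Finset.sum_apply, ContinuousLinearMap.coe_smul',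
    Pi.smul_apply, ContinuousLinearMap.proj_apply, smul_eq_mul]
  rw [Finset.sum_eq_single i]
  · simp
  · intro b _ hb; simp [Pi.single_apply, hb]
  · simp

lemma univ_split0 (m : ℕ) :
    (Finset.univ : Finset (Fin (m+1)))
      = insert (0 : Fin (m+1)) (Finset.univ.filter (fun j : Fin (m+1) => 1 ≤ (j : ℕ))) := by
  ext j
  simp only [Finset.mem_univ, Finset.mem_insert, Finset.mem_filter, true_and, true_iff]
  rcases Nat.eq_zero_or_pos (j : ℕ) with h | h
  · left; exact Fin.ext h
  · right; exact h

lemma filter_lt_one (m : ℕ) :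
    (Finset.univ.filter (fun e : Fin m => 1 ≤ (e : ℕ) ∧ (e : ℕ) < 1)) = ∅ := by
  ext e
  simp only [Finset.mem_filter, Finset.mem_univ, true_and, Finset.notMem_empty, iff_false]
  omega

/-- the hyperboloid identity `⟨ξ, Jξ⟩ = -1`, globally -/
lemma P1 (hm : 0 < m) (u : Fin m → ℝ) :
    ∑ j : Fin (m+1), eps m j * FF (K m (j : ℕ)) u ^ 2 = -1 := by
  rw [univ_split0 m, Finset.sum_insert (by simp)]
  have h1 : ∀ j ∈ Finset.univ.filter (fun j : Fin (m+1) => 1 ≤ (j : ℕ)),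
      eps m j * FF (K m (j : ℕ)) u ^ 2 = FF (K m (j : ℕ)) u ^ 2 := by
    intro j hj
    simp only [Finset.mem_filter] at hj
    have : ¬ (j : ℕ) = 0 := by omega
    simp [eps, this]
  rw [Finset.sum_congr rfl h1, Zsum hm (m - 1) 1 (by omega) le_rfl u, filter_lt_one m]
  have h0 : ((0 : Fin (m+1)) : ℕ) = 0 := rfl
  rw [h0, E0 hm u]
  simp only [eps, h0, Finset.prod_empty, mul_one]
  norm_num
  have := Real.cosh_sq_sub_sinh_sq (u ⟨0, hm⟩)
  linarith

/-- derivative of P1 : `⟨ξ, J ∂_b ξ⟩ = 0`, globally -/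
lemma Y1 (hm : 0 < m) (b : Fin m) (u : Fin m → ℝ) :
    ∑ j : Fin (m+1), eps m j * (FF (K m (j : ℕ)) u * DF (K m (j : ℕ)) b u) = 0 := by
  have hconst : (fun v : Fin m → ℝ => ∑ j : Fin (m+1), eps m j * FF (K m (j : ℕ)) v ^ 2)
      = fun _ => (-1 : ℝ) := funext fun v => P1 hm v
  have hd : HasFDerivAt (fun v : Fin m → ℝ => ∑ j : Fin (m+1), eps m j * FF (K m (j : ℕ)) v ^ 2)
      (∑ j : Fin (m+1), eps m j • (FF (K m (j : ℕ)) u • LF (K m (j : ℕ)) u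
        + FF (K m (j : ℕ)) u • LF (K m (j : ℕ)) u)) u := by
    refine HasFDerivAt.fun_sum (fun j _ => ?_)
    have h1 := (hasFDerivAt_FF (K m (j : ℕ)) u).mul (hasFDerivAt_FF (K m (j : ℕ)) u)
    have h2 := h1.const_mul (eps m j)
    have hfe : (fun v : Fin m → ℝ => eps m j * FF (K m (j : ℕ)) v ^ 2)
        = fun v => eps m j * (FF (K m (j : ℕ)) v * FF (K m (j : ℕ)) v) :=
      funext fun v => by ring
    rw [hfe]
    exact h2
  have h0 : HasFDerivAt (fun v : Fin m → ℝ =>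
      ∑ j : Fin (m+1), eps m j * FF (K m (j : ℕ)) v ^ 2)
      (0 : (Fin m → ℝ) →L[ℝ] ℝ) u := by
    rw [hconst]; exact hasFDerivAt_const _ _
  have heq := hd.unique h0
  have happ := congrArg (fun L : (Fin m → ℝ) →L[ℝ] ℝ => L (Pi.single b 1)) heq
  simp only [ContinuousLinearMap.coe_sum', Finset.sum_apply, ContinuousLinearMap.coe_smul',
    Pi.smul_apply, ContinuousLinearMap.add_apply, ContinuousLinearMap.zero_apply,
    smul_eq_mul, LF_apply] at happ
  have : ∑ j : Fin (m+1), eps m j * (2 * (FF (K m (j : ℕ)) u * DF (K m (j : ℕ)) b u)) = 0 := by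
    rw [← happ]
    refine Finset.sum_congr rfl (fun j _ => ?_)
    ring
  calc ∑ j : Fin (m+1), eps m j * (FF (K m (j : ℕ)) u * DF (K m (j : ℕ)) b u)
      = (∑ j : Fin (m+1), eps m j * (2 * (FF (K m (j : ℕ)) u * DF (K m (j : ℕ)) b u))) / 2 := by
        rw [Finset.sum_div]
        refine Finset.sum_congr rfl (fun j _ => ?_)
        ring
    _ = 0 := by rw [this]; norm_num

noncomputable def DDF (k : Fin m → ℕ) (a b : Fin m) (u : Fin m → ℝ) : ℝ :=
  sg (k b) * DF (Function.update k b (dd (k b))) a u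

lemma hasFDerivAt_DF (k : Fin m → ℕ) (b : Fin m) (u : Fin m → ℝ) :
    HasFDerivAt (DF k b) (sg (k b) • LF (Function.update k b (dd (k b))) u) u :=
  (hasFDerivAt_FF _ u).const_mul _

lemma pd_DF (k : Fin m → ℕ) (a b : Fin m) (u : Fin m → ℝ) :
    pd a (DF k b) u = DDF k a b u := by
  rw [pd, (hasFDerivAt_DF k b u).fderiv]
  simp only [ContinuousLinearMap.coe_smul', Pi.smul_apply, smul_eq_mul, LF_apply, DDF]

/-- second derivative of P1: `⟨∂_a ξ, J ∂_b ξ⟩ + ⟨ξ, J ∂_a ∂_b ξ⟩ = 0`, globally -/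
lemma Y2 (hm : 0 < m) (a b : Fin m) (u : Fin m → ℝ) :
    ∑ j : Fin (m+1), eps m j * (DF (K m (j : ℕ)) a u * DF (K m (j : ℕ)) b u
      + FF (K m (j : ℕ)) u * DDF (K m (j : ℕ)) a b u) = 0 := by
  have hconst : (fun v : Fin m → ℝ => ∑ j : Fin (m+1),
      eps m j * (FF (K m (j : ℕ)) v * DF (K m (j : ℕ)) b v)) = fun _ => (0 : ℝ) :=
    funext fun v => Y1 hm b v
  have hd : HasFDerivAt (fun v : Fin m → ℝ => ∑ j : Fin (m+1),
      eps m j * (FF (K m (j : ℕ)) v * DF (K m (j : ℕ)) b v))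
      (∑ j : Fin (m+1), eps m j • (FF (K m (j : ℕ)) u •
          (sg (K m (j : ℕ) b) • LF (Function.update (K m (j : ℕ)) b (dd (K m (j : ℕ) b))) u)
        + DF (K m (j : ℕ)) b u • LF (K m (j : ℕ)) u)) u := by
    refine HasFDerivAt.fun_sum (fun j _ => ?_)
    exact ((hasFDerivAt_FF (K m (j : ℕ)) u).mul (hasFDerivAt_DF (K m (j : ℕ)) b u)).const_mul _
  have h0 : HasFDerivAt (fun v : Fin m → ℝ => ∑ j : Fin (m+1),
      eps m j * (FF (K m (j : ℕ)) v * DF (K m (j : ℕ)) b v))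
      (0 : (Fin m → ℝ) →L[ℝ] ℝ) u := by
    rw [hconst]; exact hasFDerivAt_const _ _
  have heq := hd.unique h0
  have happ := congrArg (fun L : (Fin m → ℝ) →L[ℝ] ℝ => L (Pi.single a 1)) heq
  simp only [ContinuousLinearMap.coe_sum', Finset.sum_apply, ContinuousLinearMap.coe_smul',
    Pi.smul_apply, ContinuousLinearMap.add_apply, ContinuousLinearMap.zero_apply,
    smul_eq_mul, LF_apply] at happ
  rw [← happ]
  refine Finset.sum_congr rfl (fun j _ => ?_)
  rw [DDF]
  ring

end Part4
section Part5
variable {m : ℕ}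

lemma sg_zero : sg 0 = 0 := rfl
lemma sg_one : sg 1 = 1 := rfl
lemma sg_two : sg 2 = -1 := rfl
lemma sg_three : sg 3 = 1 := rfl
lemma sg_four : sg 4 = 1 := rfl

lemma Kja_zero (j : ℕ) (a : Fin m) (h : j < (a : ℕ)) : K m j a = 0 := by
  have ha0 : ¬ ((a : ℕ) = 0) := by omega
  by_cases hj : j = 0
  · simp [K, hj, ha0]
  · have h1 : ¬ ((a : ℕ) < j) := by omega
    have h2 : ¬ ((a : ℕ) = j) := by omega
    simp [K, hj, ha0, h1, h2]

lemma DF_zero_of_lt (j : ℕ) (a : Fin m) (h : j < (a : ℕ)) (u : Fin m → ℝ) :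
    DF (K m j) a u = 0 := by
  rw [DF, Kja_zero j a h, sg_zero, zero_mul]

lemma Kja_lt (j : ℕ) (a : Fin m) (h1 : (a : ℕ) < j) :
    K m j a = if (a : ℕ) = 0 then 3 else 1 := by
  have hj : ¬ j = 0 := by omega
  by_cases ha : (a : ℕ) = 0 <;> simp [K, hj, ha, h1]

lemma Kaa (a : Fin m) (h : 1 ≤ (a : ℕ)) : K m (a : ℕ) a = 2 := by
  have h0 : ¬ ((a : ℕ) = 0) := by omega
  have h1 : ¬ ((a : ℕ) < (a : ℕ)) := lt_irrefl _
  simp [K, h0, h1]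

lemma exchange (k : Fin m → ℕ) (a : Fin m) (u : Fin m → ℝ) :
    ff (k a) (u a) * DF k a u = sg (k a) * (ff (dd (k a)) (u a) * FF k u) := by
  rw [DF, mul_left_comm, FF_update_mul]

/-- the normalized metric -/
noncomputable def gh (hm : 0 < m) (a b : Fin m) (u : Fin m → ℝ) : ℝ :=
  if a = b then
    (if (a : ℕ) = 0 then 1 else Real.sinh (u ⟨0, hm⟩) ^ 2 *
      ∏ e ∈ Finset.univ.filter (fun e : Fin m => 1 ≤ (e : ℕ) ∧ (e : ℕ) < (a : ℕ)),
        Real.sin (u e) ^ 2)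
  else 0

lemma gram_off (hm : 0 < m) (u : Fin m → ℝ)
    (hs0 : Real.sinh (u ⟨0, hm⟩) ≠ 0)
    (hsin : ∀ a : Fin m, 1 ≤ (a : ℕ) → Real.sin (u a) ≠ 0)
    (a b : Fin m) (hab : (a : ℕ) < (b : ℕ)) :
    ∑ j : Fin (m+1), eps m j * (DF (K m (j : ℕ)) a u * DF (K m (j : ℕ)) b u) = 0 := by
  set κ : ℕ := if (a : ℕ) = 0 then 3 else 1 with hκ
  have hw : ff κ (u a) ≠ 0 := by
    by_cases ha : (a : ℕ) = 0
    · have haz : a = ⟨0, hm⟩ := Fin.ext ha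
      rw [hκ, if_pos ha, haz]
      exact hs0
    · rw [hκ, if_neg ha]
      exact hsin a (by omega)
  have hsg : sg κ = 1 := by
    rw [hκ]; by_cases ha : (a : ℕ) = 0 <;> simp [ha, sg_three, sg_one]
  have hterm : ∀ j : Fin (m+1),
      ff κ (u a) * (eps m j * (DF (K m (j : ℕ)) a u * DF (K m (j : ℕ)) b u))
        = ff (dd κ) (u a) * (eps m j * (FF (K m (j : ℕ)) u * DF (K m (j : ℕ)) b u)) := by
    intro j
    by_cases hja : (a : ℕ) < (j : ℕ)
    · have hk : K m (j : ℕ) a = κ := Kja_lt _ a hja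
      have := exchange (K m (j : ℕ)) a u
      rw [hk, hsg, one_mul] at this
      calc ff κ (u a) * (eps m j * (DF (K m (j : ℕ)) a u * DF (K m (j : ℕ)) b u))
          = (ff κ (u a) * DF (K m (j : ℕ)) a u) * (eps m j * DF (K m (j : ℕ)) b u) := by ring
        _ = (ff (dd κ) (u a) * FF (K m (j : ℕ)) u) * (eps m j * DF (K m (j : ℕ)) b u) := by
            rw [this]
        _ = ff (dd κ) (u a) * (eps m j * (FF (K m (j : ℕ)) u * DF (K m (j : ℕ)) b u)) := by ring
    · have hjb : (j : ℕ) < (b : ℕ) := by omega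
      rw [DF_zero_of_lt _ b hjb u]
      ring
  have hsum : ff κ (u a) *
      (∑ j : Fin (m+1), eps m j * (DF (K m (j : ℕ)) a u * DF (K m (j : ℕ)) b u))
      = ff (dd κ) (u a) *
        (∑ j : Fin (m+1), eps m j * (FF (K m (j : ℕ)) u * DF (K m (j : ℕ)) b u)) := by
    rw [Finset.mul_sum, Finset.mul_sum]
    exact Finset.sum_congr rfl fun j _ => hterm j
  rw [Y1 hm b u, mul_zero] at hsum
  exact (mul_eq_zero.mp hsum).resolve_left hw

lemma DF_K0 (hm : 0 < m) (u : Fin m → ℝ) :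
    DF (K m 0) ⟨0, hm⟩ u = Real.sinh (u ⟨0, hm⟩) := by
  have hk : K m 0 (⟨0, hm⟩ : Fin m) = 4 := by simp [K]
  rw [DF, hk, sg_four, one_mul]
  rw [FF, Finset.prod_eq_single_of_mem (⟨0, hm⟩ : Fin m) (Finset.mem_univ _)]
  · rw [Function.update_self]
    rfl
  · intro e _ he
    rw [Function.update_of_ne he]
    have : (e : ℕ) ≠ 0 := fun h => he (Fin.ext h)
    simp [K, this, ff]

lemma gram_diag0 (hm : 0 < m) (u : Fin m → ℝ)
    (hs0 : Real.sinh (u ⟨0, hm⟩) ≠ 0) (a : Fin m) (ha : (a : ℕ) = 0) :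
    ∑ j : Fin (m+1), eps m j * (DF (K m (j : ℕ)) a u * DF (K m (j : ℕ)) a u) = 1 := by
  have haz : a = ⟨0, hm⟩ := Fin.ext ha
  subst haz
  set s0 : ℝ := Real.sinh (u ⟨0, hm⟩) with hs0def
  have key : s0 ^ 2 * (∑ j : Fin (m+1),
      eps m j * (DF (K m (j : ℕ)) ⟨0, hm⟩ u * DF (K m (j : ℕ)) ⟨0, hm⟩ u)) = s0 ^ 2 * 1 := by
    rw [Finset.mul_sum, univ_split0 m, Finset.sum_insert (by simp)]
    have h0 : ((0 : Fin (m+1)) : ℕ) = 0 := rfl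
    have hterm : ∀ j ∈ Finset.univ.filter (fun j : Fin (m+1) => 1 ≤ (j : ℕ)),
        s0 ^ 2 * (eps m j * (DF (K m (j : ℕ)) ⟨0, hm⟩ u * DF (K m (j : ℕ)) ⟨0, hm⟩ u))
          = Real.cosh (u ⟨0, hm⟩) ^ 2 * FF (K m (j : ℕ)) u ^ 2 := by
      intro j hj
      simp only [Finset.mem_filter] at hj
      have hj1 : 1 ≤ (j : ℕ) := hj.2
      have hk : K m (j : ℕ) (⟨0, hm⟩ : Fin m) = 3 := by
        rw [Kja_lt (j : ℕ) ⟨0, hm⟩ (by exact hj1), if_pos rfl]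
      have hex := exchange (K m (j : ℕ)) ⟨0, hm⟩ u
      rw [hk, sg_three, one_mul] at hex
      have heps : eps m j = 1 := by
        have : ¬ (j : ℕ) = 0 := by omega
        simp [eps, this]
      rw [heps]
      have : (ff 3 (u ⟨0, hm⟩) * DF (K m (j : ℕ)) ⟨0, hm⟩ u) ^ 2
          = (ff (dd 3) (u ⟨0, hm⟩) * FF (K m (j : ℕ)) u) ^ 2 := by rw [hex]
      have hff3 : ff 3 (u ⟨0, hm⟩) = s0 := rfl
      have hff4 : ff (dd 3) (u ⟨0, hm⟩) = Real.cosh (u ⟨0, hm⟩) := rfl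
      rw [hff3, hff4] at this
      nlinarith [this]
    rw [Finset.sum_congr rfl hterm]
    have hz := Zsum hm (m - 1) 1 (by omega) le_rfl u
    rw [filter_lt_one m, Finset.prod_empty, mul_one] at hz
    have hsq : ∑ j ∈ Finset.univ.filter (fun j : Fin (m+1) => 1 ≤ (j : ℕ)),
        Real.cosh (u ⟨0, hm⟩) ^ 2 * FF (K m (j : ℕ)) u ^ 2
          = Real.cosh (u ⟨0, hm⟩) ^ 2 * s0 ^ 2 := by
      rw [← Finset.mul_sum, hz]
    rw [hsq, h0, DF_K0 hm u]
    have heps0 : eps m 0 = -1 := by simp [eps, h0]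
    rw [heps0]
    have hch := Real.cosh_sq_sub_sinh_sq (u ⟨0, hm⟩)
    rw [← hs0def] at hch
    nlinarith [hch]
  have hns : s0 ^ 2 ≠ 0 := pow_ne_zero 2 hs0
  have := mul_left_cancel₀ hns key
  simpa using this

end Part5
section Part6
variable {m : ℕ}

lemma update_Ka (a : Fin m) (ha : 1 ≤ (a : ℕ)) :
    Function.update (K m (a : ℕ)) a (1 : ℕ)
      = fun e : Fin m => if (e : ℕ) = 0 then 3 else if (e : ℕ) < (a : ℕ) + 1 then 1
          else if (e : ℕ) = (a : ℕ) + 1 then (0 : ℕ) else 0 := by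
  funext e
  by_cases hea : e = a
  · subst hea
    rw [Function.update_self]
    have h0 : ¬ ((e : ℕ) = 0) := by omega
    have h1 : (e : ℕ) < (e : ℕ) + 1 := by omega
    simp [h0, h1]
  · rw [Function.update_of_ne hea]
    have hne : ¬ ((e : ℕ) = (a : ℕ)) := fun h => hea (Fin.ext h)
    have ha0 : ¬ ((a : ℕ) = 0) := by omega
    by_cases he0 : (e : ℕ) = 0
    · simp [K, ha0, he0]
    · by_cases helt : (e : ℕ) < (a : ℕ)
      · have h1 : (e : ℕ) < (a : ℕ) + 1 := by omega
        simp [K, ha0, he0, helt, h1]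
      · have h1 : ¬ ((e : ℕ) < (a : ℕ) + 1) := by omega
        simp only [K, if_neg ha0, if_neg he0, if_neg helt, if_neg hne, if_neg h1, ite_self]

lemma dite_ff0 (p : ℕ) (u : Fin m → ℝ) :
    (if h : p < m then ff 0 (u ⟨p, h⟩) else 1) = 1 := by
  split <;> rfl

lemma gram_diag1 (hm : 0 < m) (u : Fin m → ℝ)
    (hsin : ∀ a : Fin m, 1 ≤ (a : ℕ) → Real.sin (u a) ≠ 0)
    (a : Fin m) (ha : 1 ≤ (a : ℕ)) :
    ∑ j : Fin (m+1), eps m j * (DF (K m (j : ℕ)) a u * DF (K m (j : ℕ)) a u)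
      = Real.sinh (u ⟨0, hm⟩) ^ 2 *
        ∏ e ∈ Finset.univ.filter (fun e : Fin m => 1 ≤ (e : ℕ) ∧ (e : ℕ) < (a : ℕ)),
          Real.sin (u e) ^ 2 := by
  have hwa : Real.sin (u a) ≠ 0 := hsin a ha
  set sa : ℝ := Real.sin (u a) with hsadef
  have key : sa ^ 2 * (∑ j : Fin (m+1),
      eps m j * (DF (K m (j : ℕ)) a u * DF (K m (j : ℕ)) a u))
      = sa ^ 2 * (Real.sinh (u ⟨0, hm⟩) ^ 2 *
        ∏ e ∈ Finset.univ.filter (fun e : Fin m => 1 ≤ (e : ℕ) ∧ (e : ℕ) < (a : ℕ)),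
          Real.sin (u e) ^ 2) := by
    rw [Finset.mul_sum,
      ← Finset.sum_filter_add_sum_filter_not Finset.univ (fun j : Fin (m+1) => (a : ℕ) < (j : ℕ))]
    -- part 1 : j > a
    have hpart1 : ∑ j ∈ Finset.univ.filter (fun j : Fin (m+1) => (a : ℕ) < (j : ℕ)),
        sa ^ 2 * (eps m j * (DF (K m (j : ℕ)) a u * DF (K m (j : ℕ)) a u))
        = Real.cos (u a) ^ 2 * (Real.sinh (u ⟨0, hm⟩) ^ 2 *
            ∏ e ∈ Finset.univ.filter (fun e : Fin m => 1 ≤ (e : ℕ) ∧ (e : ℕ) < (a : ℕ) + 1),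
              Real.sin (u e) ^ 2) := by
      have hterm : ∀ j ∈ Finset.univ.filter (fun j : Fin (m+1) => (a : ℕ) < (j : ℕ)),
          sa ^ 2 * (eps m j * (DF (K m (j : ℕ)) a u * DF (K m (j : ℕ)) a u))
            = Real.cos (u a) ^ 2 * FF (K m (j : ℕ)) u ^ 2 := by
        intro j hj
        simp only [Finset.mem_filter] at hj
        have hja : (a : ℕ) < (j : ℕ) := hj.2
        have hk : K m (j : ℕ) a = 1 := by
          rw [Kja_lt (j : ℕ) a hja, if_neg (by omega)]
        have hex := exchange (K m (j : ℕ)) a u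
        rw [hk, sg_one, one_mul] at hex
        have heps : eps m j = 1 := by
          have : ¬ (j : ℕ) = 0 := by omega
          simp [eps, this]
        have hff1 : ff 1 (u a) = sa := rfl
        have hff2 : ff (dd 1) (u a) = Real.cos (u a) := rfl
        rw [hff1, hff2] at hex
        rw [heps]
        linear_combination (sa * DF (K m (j : ℕ)) a u + Real.cos (u a) * FF (K m (j : ℕ)) u) * hex
      rw [Finset.sum_congr rfl hterm]
      have hfe : Finset.univ.filter (fun j : Fin (m+1) => (a : ℕ) < (j : ℕ))
          = Finset.univ.filter (fun j : Fin (m+1) => (a : ℕ) + 1 ≤ (j : ℕ)) := by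
        ext j
        simp only [Finset.mem_filter, Finset.mem_univ, true_and]
        omega
      rw [← Finset.mul_sum, hfe, Zsum hm (m - ((a : ℕ) + 1)) ((a : ℕ) + 1)
        (by have := a.isLt; omega) (by omega) u]
    -- part 2 : j ≤ a
    have hpart2 : ∑ j ∈ Finset.univ.filter (fun j : Fin (m+1) => ¬ (a : ℕ) < (j : ℕ)),
        sa ^ 2 * (eps m j * (DF (K m (j : ℕ)) a u * DF (K m (j : ℕ)) a u))
        = sa ^ 2 * (Real.sinh (u ⟨0, hm⟩) ^ 2 *
            ∏ e ∈ Finset.univ.filter (fun e : Fin m => 1 ≤ (e : ℕ) ∧ (e : ℕ) < (a : ℕ) + 1),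
              Real.sin (u e) ^ 2) := by
      have haf : ((⟨(a : ℕ), by omega⟩ : Fin (m+1)) : ℕ) = (a : ℕ) := rfl
      rw [Finset.sum_eq_single_of_mem (⟨(a : ℕ), by omega⟩ : Fin (m+1)) ?_ ?_]
      · have hK : K m ((⟨(a : ℕ), by omega⟩ : Fin (m+1)) : ℕ) = K m (a : ℕ) := rfl
        rw [hK]
        have heps : eps m (⟨(a : ℕ), by omega⟩ : Fin (m+1)) = 1 := by
          simp only [eps, haf]
          rw [if_neg (by omega)]
        rw [heps]
        have hDF : DF (K m (a : ℕ)) a u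
            = - FF (Function.update (K m (a : ℕ)) a (1 : ℕ)) u := by
          rw [DF, Kaa a ha, sg_two]
          have : dd 2 = 1 := rfl
          rw [this]
          ring
        rw [hDF, update_Ka a ha]
        rw [Eform hm ((a : ℕ) + 1) 0 (by omega) u, dite_ff0]
        rw [mul_one, Finset.prod_pow]
        ring
      · simp only [Finset.mem_filter, Finset.mem_univ, true_and, haf]
        omega
      · intro j hj hjne
        simp only [Finset.mem_filter, Finset.mem_univ, true_and, not_lt] at hj
        have hjlt : (j : ℕ) < (a : ℕ) := by
          rcases Nat.lt_or_ge (j : ℕ) (a : ℕ) with h | h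
          · exact h
          · exfalso; exact hjne (Fin.ext (by omega))
        rw [DF_zero_of_lt (j : ℕ) a hjlt u]
        ring
    rw [hpart1, hpart2]
    have hprod : (∏ e ∈ Finset.univ.filter
        (fun e : Fin m => 1 ≤ (e : ℕ) ∧ (e : ℕ) < (a : ℕ) + 1), Real.sin (u e) ^ 2)
        = sa ^ 2 * ∏ e ∈ Finset.univ.filter
            (fun e : Fin m => 1 ≤ (e : ℕ) ∧ (e : ℕ) < (a : ℕ)), Real.sin (u e) ^ 2 := by
      have hins : Finset.univ.filter (fun e : Fin m => 1 ≤ (e : ℕ) ∧ (e : ℕ) < (a : ℕ) + 1)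
          = insert a (Finset.univ.filter (fun e : Fin m => 1 ≤ (e : ℕ) ∧ (e : ℕ) < (a : ℕ))) := by
        ext e
        simp only [Finset.mem_filter, Finset.mem_univ, true_and, Finset.mem_insert, Fin.ext_iff]
        omega
      rw [hins, Finset.prod_insert (by simp)]
    rw [hprod]
    have hsc := Real.sin_sq_add_cos_sq (u a)
    rw [← hsadef] at hsc
    linear_combination (Real.sinh (u ⟨0, hm⟩) ^ 2 * sa ^ 2 * (∏ e ∈ Finset.univ.filter
      (fun e : Fin m => 1 ≤ (e : ℕ) ∧ (e : ℕ) < (a : ℕ)), Real.sin (u e) ^ 2)) * hsc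
  exact mul_left_cancel₀ (pow_ne_zero 2 hwa) key

/-- the full Gram computation -/
lemma gram (hm : 0 < m) (u : Fin m → ℝ)
    (hs0 : Real.sinh (u ⟨0, hm⟩) ≠ 0)
    (hsin : ∀ a : Fin m, 1 ≤ (a : ℕ) → Real.sin (u a) ≠ 0) (a b : Fin m) :
    ∑ j : Fin (m+1), eps m j * (DF (K m (j : ℕ)) a u * DF (K m (j : ℕ)) b u)
      = gh hm a b u := by
  rcases eq_or_ne a b with rfl | hab
  · rw [gh, if_pos rfl]
    by_cases ha : (a : ℕ) = 0
    · rw [if_pos ha]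
      exact gram_diag0 hm u hs0 a ha
    · rw [if_neg ha]
      exact gram_diag1 hm u hsin a (by omega)
  · rw [gh, if_neg hab]
    have hne : (a : ℕ) ≠ (b : ℕ) := fun h => hab (Fin.ext h)
    rcases Nat.lt_or_ge (a : ℕ) (b : ℕ) with h | h
    · exact gram_off hm u hs0 hsin a b h
    · have hba : (b : ℕ) < (a : ℕ) := by omega
      have := gram_off hm u hs0 hsin b a hba
      rw [← this]
      exact Finset.sum_congr rfl fun j _ => by ring

end Part6
section Part7
open Matrix
variable {m : ℕ}

/-- normalized Christoffel symbol `⟨∂_a∂_b ξ, J ∂_c ξ⟩` -/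
noncomputable def Gml (m : ℕ) (a b c : Fin m) (u : Fin m → ℝ) : ℝ :=
  ∑ j : Fin (m+1), eps m j * (DDF (K m (j : ℕ)) a b u * DF (K m (j : ℕ)) c u)

lemma gh_ne_zero (hm : 0 < m) (u : Fin m → ℝ)
    (hs0 : Real.sinh (u ⟨0, hm⟩) ≠ 0)
    (hsin : ∀ a : Fin m, 1 ≤ (a : ℕ) → Real.sin (u a) ≠ 0) (c : Fin m) :
    gh hm c c u ≠ 0 := by
  rw [gh, if_pos rfl]
  by_cases hc : (c : ℕ) = 0
  · rw [if_pos hc]; norm_num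
  · rw [if_neg hc]
    refine mul_ne_zero (pow_ne_zero 2 hs0) ?_
    rw [Finset.prod_ne_zero_iff]
    intro e he
    simp only [Finset.mem_filter] at he
    exact pow_ne_zero 2 (hsin e he.2.1)

/-- the Gauss-formula expansion of the second derivative vector, in component `m` -/
lemma expansion (hm : 0 < m) (u : Fin m → ℝ)
    (hs0 : Real.sinh (u ⟨0, hm⟩) ≠ 0)
    (hsin : ∀ a : Fin m, 1 ≤ (a : ℕ) → Real.sin (u a) ≠ 0) (a b : Fin m) :
    DDF (K m m) a b u
      = gh hm a b u * FF (K m m) u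
        + ∑ c : Fin m, (Gml m a b c u * (gh hm c c u)⁻¹) * DF (K m m) c u := by
  classical
  set M : Matrix (Fin (m+1)) (Fin (m+1)) ℝ :=
    Matrix.of fun i j => Fin.cases (FF (K m (j : ℕ)) u) (fun c => DF (K m (j : ℕ)) c u) i
    with hM
  set dvec : Fin (m+1) → ℝ := Fin.cases (-1) (fun c => gh hm c c u) with hdvec
  have hMapply0 : ∀ j, M 0 j = FF (K m (j : ℕ)) u := fun j => rfl
  have hMapplyS : ∀ (c : Fin m) j, M c.succ j = DF (K m (j : ℕ)) c u := fun c j => rfl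
  have hGram : M * Matrix.diagonal (eps m) * Mᵀ = Matrix.diagonal dvec := by
    ext i i'
    rw [Matrix.mul_apply]
    have hentry : ∀ j, (M * Matrix.diagonal (eps m)) i j * Mᵀ j i'
        = eps m j * (M i j * M i' j) := by
      intro j
      rw [Matrix.mul_diagonal, Matrix.transpose_apply]
      ring
    rw [Finset.sum_congr rfl fun j _ => hentry j]
    induction i using Fin.cases with
    | zero =>
      induction i' using Fin.cases with
      | zero =>
        have := P1 hm u
        rw [Matrix.diagonal_apply_eq]
        have h2 : ∑ j : Fin (m+1), eps m j * (M 0 j * M 0 j)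
            = ∑ j : Fin (m+1), eps m j * FF (K m (j : ℕ)) u ^ 2 := by
          refine Finset.sum_congr rfl fun j _ => ?_
          rw [hMapply0]; ring
        rw [h2, this]
        rfl
      | succ c =>
        rw [Matrix.diagonal_apply_ne _ (by simp [Fin.ext_iff])]
        have h2 : ∑ j : Fin (m+1), eps m j * (M 0 j * M c.succ j)
            = ∑ j : Fin (m+1), eps m j * (FF (K m (j : ℕ)) u * DF (K m (j : ℕ)) c u) := rfl
        rw [h2, Y1 hm c u]
    | succ c =>
      induction i' using Fin.cases with
      | zero =>
        rw [Matrix.diagonal_apply_ne _ (by simp [Fin.ext_iff])]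
        have h2 : ∑ j : Fin (m+1), eps m j * (M c.succ j * M 0 j)
            = ∑ j : Fin (m+1), eps m j * (FF (K m (j : ℕ)) u * DF (K m (j : ℕ)) c u) := by
          refine Finset.sum_congr rfl fun j _ => ?_
          rw [hMapply0, hMapplyS]; ring
        rw [h2, Y1 hm c u]
      | succ c' =>
        have h2 : ∑ j : Fin (m+1), eps m j * (M c.succ j * M c'.succ j)
            = ∑ j : Fin (m+1), eps m j * (DF (K m (j : ℕ)) c u * DF (K m (j : ℕ)) c' u) := rfl
        rw [h2, gram hm u hs0 hsin c c']
        rcases eq_or_ne c c' with rfl | hcc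
        · rw [Matrix.diagonal_apply_eq]
          rfl
        · rw [Matrix.diagonal_apply_ne _ (by simp [Fin.ext_iff, Fin.val_eq_val, hcc]),
            gh, if_neg hcc]
  have hdet : M.det ≠ 0 := by
    intro h0
    have h1 : (M * Matrix.diagonal (eps m) * Mᵀ).det = 0 := by
      rw [Matrix.det_mul, Matrix.det_mul, Matrix.det_transpose, h0]
      ring
    rw [hGram, Matrix.det_diagonal] at h1
    rw [Finset.prod_eq_zero_iff] at h1
    obtain ⟨i, _, hi⟩ := h1
    induction i using Fin.cases with
    | zero => norm_num [hdvec] at hi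
    | succ c =>
      have : dvec c.succ = gh hm c c u := rfl
      rw [this] at hi
      exact gh_ne_zero hm u hs0 hsin c hi
  have hunit : IsUnit M.det := isUnit_iff_ne_zero.mpr hdet
  set V : Fin (m+1) → ℝ := fun j => DDF (K m (j : ℕ)) a b u with hV
  set w : Fin (m+1) → ℝ :=
    Fin.cases (gh hm a b u) (fun c => Gml m a b c u * (gh hm c c u)⁻¹) with hw
  have hMV : M *ᵥ (fun j => eps m j * V j)
      = M *ᵥ (Matrix.diagonal (eps m) *ᵥ (Mᵀ *ᵥ w)) := by
    rw [Matrix.mulVec_mulVec, Matrix.mulVec_mulVec, hGram]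
    funext i
    rw [Matrix.mulVec, dotProduct]
    have hrhs : (Matrix.diagonal dvec *ᵥ w) i = dvec i * w i := Matrix.mulVec_diagonal _ _ _
    rw [hrhs]
    induction i using Fin.cases with
    | zero =>
      have h2 : ∑ j : Fin (m+1), M 0 j * (eps m j * V j)
          = ∑ j : Fin (m+1), eps m j * (FF (K m (j : ℕ)) u * DDF (K m (j : ℕ)) a b u) := by
        refine Finset.sum_congr rfl fun j _ => ?_
        rw [hMapply0]; ring
      have hY2 := Y2 hm a b u
      have hG := gram hm u hs0 hsin a b
      have h3 : ∑ j : Fin (m+1), eps m j * (FF (K m (j : ℕ)) u * DDF (K m (j : ℕ)) a b u)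
          = - gh hm a b u := by
        have hsplit : ∑ j : Fin (m+1), eps m j * (DF (K m (j : ℕ)) a u * DF (K m (j : ℕ)) b u
            + FF (K m (j : ℕ)) u * DDF (K m (j : ℕ)) a b u)
            = (∑ j : Fin (m+1), eps m j * (DF (K m (j : ℕ)) a u * DF (K m (j : ℕ)) b u))
              + ∑ j : Fin (m+1), eps m j * (FF (K m (j : ℕ)) u * DDF (K m (j : ℕ)) a b u) := by
          rw [← Finset.sum_add_distrib]
          refine Finset.sum_congr rfl fun j _ => ?_
          ring
        rw [hsplit, hG] at hY2
        linarith
      rw [h2, h3]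
      have hd0 : dvec 0 = -1 := rfl
      have hw0 : w 0 = gh hm a b u := rfl
      rw [hd0, hw0]
      ring
    | succ c =>
      have h2 : ∑ j : Fin (m+1), M c.succ j * (eps m j * V j)
          = Gml m a b c u := by
        rw [Gml]
        refine Finset.sum_congr rfl fun j _ => ?_
        rw [hMapplyS]; ring
      have hdS : dvec c.succ = gh hm c c u := rfl
      have hwS : w c.succ = Gml m a b c u * (gh hm c c u)⁻¹ := rfl
      rw [h2, hdS, hwS]
      field_simp [gh_ne_zero hm u hs0 hsin c]
  have hcancel : (fun j => eps m j * V j) = Matrix.diagonal (eps m) *ᵥ (Mᵀ *ᵥ w) := by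
    have h4 := congrArg (fun x => M⁻¹ *ᵥ x) hMV
    simp only [Matrix.mulVec_mulVec, Matrix.nonsing_inv_mul M hunit, Matrix.one_mulVec] at h4
    rw [← Matrix.mul_assoc M⁻¹ M _, Matrix.nonsing_inv_mul M hunit, Matrix.one_mul,
      ← Matrix.mulVec_mulVec] at h4
    exact h4
  have hlast := congrFun hcancel (Fin.last m)
  have hepslast : eps m (Fin.last m) = 1 := by
    simp only [eps, Fin.val_last]
    rw [if_neg (by omega)]
  rw [Matrix.mulVec_diagonal, hepslast, one_mul] at hlast
  simp only [hepslast, one_mul] at hlast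
  have hVlast : V (Fin.last m) = DDF (K m m) a b u := by
    rw [hV]
    simp [Fin.val_last]
  rw [hVlast] at hlast
  rw [hlast]
  rw [Matrix.mulVec, dotProduct, Fin.sum_univ_succ]
  have hT0 : Mᵀ (Fin.last m) 0 = FF (K m m) u := by
    rw [Matrix.transpose_apply]
    have : M 0 (Fin.last m) = FF (K m ((Fin.last m : Fin (m+1)) : ℕ)) u := rfl
    rw [this, Fin.val_last]
  have hTS : ∀ c : Fin m, Mᵀ (Fin.last m) c.succ = DF (K m m) c u := by
    intro c
    rw [Matrix.transpose_apply]
    have : M c.succ (Fin.last m) = DF (K m ((Fin.last m : Fin (m+1)) : ℕ)) c u := rfl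
    rw [this, Fin.val_last]
  rw [hT0]
  have hw0 : w 0 = gh hm a b u := rfl
  rw [hw0]
  congr 1
  · ring
  refine Finset.sum_congr rfl fun c _ => ?_
  rw [hTS c]
  have hwS : w c.succ = Gml m a b c u * (gh hm c c u)⁻¹ := rfl
  rw [hwS]
  ring

end Part7
section Part8
variable {m : ℕ}

lemma pd_cmul (k : Fin m → ℕ) (c : ℝ) (b : Fin m) (u : Fin m → ℝ) :
    pd b (fun v => c * FF k v) u = c * DF k b u := by
  have h := (hasFDerivAt_FF k u).const_mul c
  rw [pd, h.fderiv]
  simp only [ContinuousLinearMap.coe_smul', Pi.smul_apply, smul_eq_mul, LF_apply]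

lemma pd_pd_cmul (k : Fin m → ℕ) (c : ℝ) (a b : Fin m) (u : Fin m → ℝ) :
    pd a (fun v => pd b (fun w => c * FF k w) v) u = c * DDF k a b u := by
  have hfe : (fun v => pd b (fun w => c * FF k w) v)
      = fun v => (c * sg (k b)) * FF (Function.update k b (dd (k b))) v := by
    funext v
    rw [pd_cmul, DF]
    ring
  rw [hfe, pd_cmul, DDF]
  ring

lemma continuous_ff (k : ℕ) : Continuous (ff k) := by
  match k with
  | 0 => exact continuous_const
  | 1 => exact Real.continuous_sin
  | 2 => exact Real.continuous_cos
  | 3 => exact Real.continuous_sinh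
  | (n+4) => exact Real.continuous_cosh

lemma continuous_FF (k : Fin m → ℕ) : Continuous (FF k) := by
  refine continuous_finset_prod _ (fun e _ => ?_)
  exact (continuous_ff (k e)).comp (continuous_apply e)

lemma filter_eq_all (m : ℕ) (hm : 0 < m) :
    (Finset.univ.filter (fun e : Fin m => 1 ≤ (e : ℕ) ∧ (e : ℕ) < m))
      = Finset.univ.filter (fun e : Fin m => 1 ≤ (e : ℕ)) := by
  ext e
  simp only [Finset.mem_filter, Finset.mem_univ, true_and]
  have := e.isLt
  omega

lemma FF_Km_ne_iff (hm : 0 < m) (v : Fin m → ℝ) :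
    (Real.sinh (v ⟨0, hm⟩) ≠ 0 ∧ ∀ a : Fin m, 1 ≤ (a : ℕ) → Real.sin (v a) ≠ 0)
      ↔ FF (K m m) v ≠ 0 := by
  rw [Ej hm m (by omega) v, dif_neg (lt_irrefl m), mul_one]
  constructor
  · rintro ⟨h1, h2⟩
    refine mul_ne_zero h1 ?_
    rw [Finset.prod_ne_zero_iff]
    intro e he
    simp only [Finset.mem_filter] at he
    exact h2 e he.2.1
  · intro h
    constructor
    · intro h0
      exact h (by rw [h0, zero_mul])
    · intro a ha h0
      apply h
      have : (∏ e ∈ Finset.univ.filter (fun e : Fin m => 1 ≤ (e : ℕ) ∧ (e : ℕ) < m),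
          Real.sin (v e)) = 0 :=
        Finset.prod_eq_zero (by
          simp only [Finset.mem_filter, Finset.mem_univ, true_and]
          exact ⟨ha, a.isLt⟩) h0
      rw [this, mul_zero]

lemma log_nu_eq (hm : 0 < m) (v : Fin m → ℝ) :
    Real.log (1 / (|Real.sinh (v ⟨0, hm⟩)| *
      ∏ a ∈ Finset.univ.filter (fun a : Fin m => 1 ≤ (a : ℕ)), |Real.sin (v a)|))
      = - Real.log (FF (K m m) v) := by
  have habs : |FF (K m m) v| = |Real.sinh (v ⟨0, hm⟩)| *
      ∏ a ∈ Finset.univ.filter (fun a : Fin m => 1 ≤ (a : ℕ)), |Real.sin (v a)| := by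
    rw [Ej hm m (by omega) v, dif_neg (lt_irrefl m), mul_one, abs_mul, Finset.abs_prod,
      filter_eq_all m hm]
  rw [← habs, one_div, Real.log_inv, Real.log_abs]

end Part8

/-- for the hyperboloid model with metric `g_{11} = r r†`,
`g_{ab} = δ_{ab} r r† sinh² u^1 ∏_{2≤c≤a} sin² u^{c−1}` and constant mixture curvature
`−1/(r r†)`, the gauge function `ν(u) = 1/(|sinh u^1| ∏_{a≥2} |sin u^a|)` solves
`∂_a s_b − Γ^{(−1)c}_{ab} s_c − s_a s_b = −(1/(r r†)) g_{ab}`, `s_a = ∂_a log ν`. -/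
theorem stmt19 {m : ℕ} (hm : 0 < m) (r rd : ℝ) (hr : 0 < r) (hrd : 1 < rd)
    (ξ : Fin (m + 1) → (Fin m → ℝ) → ℝ)
    (hξ : ∀ i u, ξ i u =
      if (i : ℕ) = 0 then Real.cosh (u ⟨0, hm⟩)
      else Real.sinh (u ⟨0, hm⟩) *
        (∏ e ∈ Finset.univ.filter (fun e : Fin m => 1 ≤ (e : ℕ) ∧ (e : ℕ) < (i : ℕ)),
          Real.sin (u e)) *
        (if h : (i : ℕ) < m then Real.cos (u ⟨i, h⟩) else 1))
    (θ η : Fin (m + 1) → (Fin m → ℝ) → ℝ)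
    (hθ : ∀ i u, θ i u = (if (i : ℕ) = 0 then -r else r) * ξ i u)
    (hη : ∀ i u, η i u = rd * ξ i u)
    (D : Set (Fin m → ℝ))
    (hD : D = {u | Real.sinh (u ⟨0, hm⟩) ≠ 0 ∧
      ∀ a : Fin m, 1 ≤ (a : ℕ) → Real.sin (u a) ≠ 0})
    (g ginv : Fin m → Fin m → (Fin m → ℝ) → ℝ)
    (hg : ∀ a b u, g a b u = (if a = b then
      r * rd * (if (a : ℕ) = 0 then 1 else Real.sinh (u ⟨0, hm⟩) ^ 2 *
        ∏ e ∈ Finset.univ.filter (fun e : Fin m => 1 ≤ (e : ℕ) ∧ (e : ℕ) < (a : ℕ)),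
          Real.sin (u e) ^ 2) else 0))
    (hginv : ∀ a b u, ginv a b u = (if a = b then
      (r * rd * (if (a : ℕ) = 0 then 1 else Real.sinh (u ⟨0, hm⟩) ^ 2 *
        ∏ e ∈ Finset.univ.filter (fun e : Fin m => 1 ≤ (e : ℕ) ∧ (e : ℕ) < (a : ℕ)),
          Real.sin (u e) ^ 2))⁻¹ else 0))
    (Γ : Fin m → Fin m → Fin m → (Fin m → ℝ) → ℝ)
    (hΓ : ∀ a b c u, Γ a b c u = ∑ j, pd a (fun v => pd b (η j) v) u * pd c (θ j) u)
    (ν : (Fin m → ℝ) → ℝ)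
    (hν : ∀ u, ν u = 1 / (|Real.sinh (u ⟨0, hm⟩)| *
      ∏ a ∈ Finset.univ.filter (fun a : Fin m => 1 ≤ (a : ℕ)), |Real.sin (u a)|))
    (s : Fin m → (Fin m → ℝ) → ℝ)
    (hs : ∀ a u, s a u = pd a (fun v => Real.log (ν v)) u) :
    ∀ a b, ∀ u ∈ D,
      pd a (s b) u - (∑ c, (∑ e, Γ a b e u * ginv e c u) * s c u) - s a u * s b u
        = -(1 / (r * rd)) * g a b u := by
  intro a b u hu
  rw [hD] at hu
  obtain ⟨hs0, hsin⟩ := hu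
  have hF : FF (K m m) u ≠ 0 := (FF_Km_ne_iff hm u).mp ⟨hs0, hsin⟩
  have hrd0 : (0 : ℝ) < rd := lt_trans one_pos hrd
  have hrrd : r * rd ≠ 0 := ne_of_gt (mul_pos hr hrd0)
  have hξv : ∀ (i : Fin (m+1)) (v : Fin m → ℝ), ξ i v = FF (K m (i : ℕ)) v := by
    intro i v
    rw [hξ]
    by_cases hi : (i : ℕ) = 0
    · rw [if_pos hi, hi, E0 hm v]
    · rw [if_neg hi, Ej hm (i : ℕ) (by omega) v]
  have hΓv : ∀ c : Fin m, Γ a b c u = r * rd * Gml m a b c u := by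
    intro c
    rw [hΓ]
    have hterm : ∀ j : Fin (m+1),
        pd a (fun v => pd b (η j) v) u * pd c (θ j) u
          = r * rd * (eps m j * (DDF (K m (j : ℕ)) a b u * DF (K m (j : ℕ)) c u)) := by
      intro j
      have hηf : η j = fun v => rd * FF (K m (j : ℕ)) v := funext fun v => by
        rw [hη, hξv]
      have hθf : θ j = fun v => (if (j : ℕ) = 0 then -r else r) * FF (K m (j : ℕ)) v :=
        funext fun v => by rw [hθ, hξv]
      rw [hηf, hθf, pd_pd_cmul, pd_cmul]
      by_cases hj : (j : ℕ) = 0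
      · rw [if_pos hj]
        have : eps m j = -1 := by simp [eps, hj]
        rw [this]
        ring
      · rw [if_neg hj]
        have : eps m j = 1 := by simp [eps, hj]
        rw [this]
        ring
    rw [Finset.sum_congr rfl fun j _ => hterm j, ← Finset.mul_sum, Gml]
  have hgv : g a b u = r * rd * gh hm a b u := by
    rw [hg, gh]
    split_ifs <;> ring
  have hginva : ∀ c : Fin m, (∑ e, Γ a b e u * ginv e c u)
      = Gml m a b c u * (gh hm c c u)⁻¹ := by
    intro c
    have hghc := gh_ne_zero hm u hs0 hsin c
    rw [Finset.sum_eq_single c ?_ ?_]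
    · rw [hginv, if_pos rfl, hΓv c]
      have hbody : gh hm c c u = (if (c : ℕ) = 0 then 1 else Real.sinh (u ⟨0, hm⟩) ^ 2 *
          ∏ e ∈ Finset.univ.filter (fun e : Fin m => 1 ≤ (e : ℕ) ∧ (e : ℕ) < (c : ℕ)),
            Real.sin (u e) ^ 2) := by
        rw [gh, if_pos rfl]
      rw [← hbody, mul_inv]
      field_simp
    · intro e _ hec
      rw [hginv, if_neg hec, mul_zero]
    · intro h
      exact absurd (Finset.mem_univ c) h
  have hsv : ∀ (c : Fin m) (v : Fin m → ℝ), FF (K m m) v ≠ 0 →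
      s c v = -(DF (K m m) c v * (FF (K m m) v)⁻¹) := by
    intro c v hv
    rw [hs]
    have hfe : (fun w => Real.log (ν w)) = fun w => - Real.log (FF (K m m) w) := by
      funext w
      rw [hν, log_nu_eq hm w]
    rw [hfe]
    have hlog : HasFDerivAt (fun w => Real.log (FF (K m m) w))
        ((FF (K m m) v)⁻¹ • LF (K m m) v) v :=
      (Real.hasDerivAt_log hv).comp_hasFDerivAt v (hasFDerivAt_FF (K m m) v)
    rw [pd, hlog.fun_neg.fderiv]
    simp only [ContinuousLinearMap.neg_apply, ContinuousLinearMap.coe_smul', Pi.smul_apply,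
      smul_eq_mul, LF_apply]
    ring
  have hDopen : IsOpen {v : Fin m → ℝ | FF (K m m) v ≠ 0} := by
    have h0 : {v : Fin m → ℝ | FF (K m m) v ≠ 0} = (FF (K m m)) ⁻¹' ({0}ᶜ) := rfl
    rw [h0]
    exact (isOpen_compl_singleton).preimage (continuous_FF (K m m))
  have hsev : s b =ᶠ[nhds u] (fun v => -(DF (K m m) b v * (FF (K m m) v)⁻¹)) :=
    Filter.eventuallyEq_of_mem (hDopen.mem_nhds hF) (fun v hv => hsv b v hv)
  have hpdsb : pd a (s b) u
      = -(DDF (K m m) a b u * (FF (K m m) u)⁻¹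
          - DF (K m m) b u * ((FF (K m m) u ^ 2)⁻¹ * DF (K m m) a u)) := by
    rw [pd, hsev.fderiv_eq]
    have h1 := hasFDerivAt_DF (K m m) b u
    have h2 : HasFDerivAt (fun v => (FF (K m m) v)⁻¹)
        ((-(FF (K m m) u ^ 2)⁻¹) • LF (K m m) u) u :=
      (hasDerivAt_inv hF).comp_hasFDerivAt u (hasFDerivAt_FF (K m m) u)
    have h3 := (h1.fun_mul h2).fun_neg
    rw [h3.fderiv]
    simp only [ContinuousLinearMap.neg_apply, ContinuousLinearMap.add_apply,
      ContinuousLinearMap.coe_smul', Pi.smul_apply, smul_eq_mul, LF_apply]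
    have h4 : sg (K m m b) * DF (Function.update (K m m) b (dd (K m m b))) a u
        = DDF (K m m) a b u := rfl
    rw [h4]
    ring
  have hexp := expansion hm u hs0 hsin a b
  have hsum : (∑ c, (∑ e, Γ a b e u * ginv e c u) * s c u)
      = -((FF (K m m) u)⁻¹ * (DDF (K m m) a b u - gh hm a b u * FF (K m m) u)) := by
    have hstep : ∀ c : Fin m, (∑ e, Γ a b e u * ginv e c u) * s c u
        = -((FF (K m m) u)⁻¹ * ((Gml m a b c u * (gh hm c c u)⁻¹) * DF (K m m) c u)) := by
      intro c
      rw [hginva c, hsv c u hF]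
      ring
    rw [Finset.sum_congr rfl fun c _ => hstep c, Finset.sum_neg_distrib, ← Finset.mul_sum]
    have h5 : (∑ c : Fin m, (Gml m a b c u * (gh hm c c u)⁻¹) * DF (K m m) c u)
        = DDF (K m m) a b u - gh hm a b u * FF (K m m) u := by
      rw [hexp]
      ring
    rw [h5]
  rw [hpdsb, hsum, hsv a u hF, hsv b u hF, hgv]
  have hFinv : FF (K m m) u * (FF (K m m) u)⁻¹ = 1 := mul_inv_cancel₀ hF
  field_simp
  ring
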